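/- Let n ≥ 2, let ⊤ denote the largest element of Fin n, and let σ, τ be permutations of Fin n each satisfying ℓ(σ) + ℓ(σ⁻¹ * s) = n − 1 and ℓ(τ) + ℓ(τ⁻¹ * s) = n − 1, where s is the n-cycle i ↦ i + 1 (mod n). Suppose τ(⊤) = ⊤ and σ(⊤) = i with i ≠ ⊤. Set σ' = (Equiv.swap i ⊤) * σ. Then: σ'(⊤) = ⊤; σ' satisfies ℓ(σ') + ℓ(σ'⁻¹ * s) = n − 1; σ⁻¹ * σ' is a transposition; c(σ'⁻¹ * τ) = c(σ⁻¹ * τ) + 1; and ℓ(σ'⁻¹ * τ) = ℓ(σ⁻¹ * τ) − 1. -/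

import Mathlib

/-- Minimal number of transpositions whose product is `σ` (0 for the identity);
this is the graph distance from the identity to `σ` in the Cayley graph of the
symmetric group on `Fin n` generated by all transpositions. -/
noncomputable def swapLength (n : ℕ) (σ : Equiv.Perm (Fin n)) : ℕ :=
  sInf {k | ∃ l : List (Equiv.Perm (Fin n)),
    l.length = k ∧ (∀ t ∈ l, t.IsSwap) ∧ l.prod = σ}

/-- Number of orbits of `σ` acting on `Fin n` (fixed points count as orbits). -/
noncomputable def orbitCount (n : ℕ) (σ : Equiv.Perm (Fin n)) : ℕ :=
  Nat.card (MulAction.orbitRel.Quotient (Subgroup.zpowers σ) (Fin n))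


set_option linter.unusedSectionVars false

section Machinery

open Equiv Equiv.Perm

variable {α : Type*} [Fintype α] [DecidableEq α]


variable {α : Type*} [Fintype α] [DecidableEq α]

namespace SwapRed

/-- cycle count -/
noncomputable def cc (σ : Perm α) : ℕ :=
  Nat.card (Quotient (SameCycle.setoid σ))

/-- class of a point -/
noncomputable def cl (σ : Perm α) (x : α) : Quotient (SameCycle.setoid σ) :=
  Quotient.mk (SameCycle.setoid σ) x

lemma cl_eq_iff {σ : Perm α} {x y : α} : cl σ x = cl σ y ↔ σ.SameCycle x y :=
  ⟨fun h => Quotient.exact h, fun h => Quotient.sound h⟩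

lemma cl_out (σ : Perm α) (q : Quotient (SameCycle.setoid σ)) : cl σ q.out = q :=
  Quotient.out_eq q

lemma cl_surjective (σ : Perm α) : Function.Surjective (cl σ) :=
  fun q => ⟨q.out, cl_out σ q⟩

/-- Key walking lemma. -/
lemma pow_swap_mul_eq (σ : Perm α) (a b x : α) (ha : ¬σ.SameCycle x a)
    (hb : ¬σ.SameCycle x b) : ∀ k : ℕ, ((Equiv.swap a b * σ) ^ k) x = (σ ^ k) x := by
  intro k
  induction k with
  | zero => simp
  | succ k ih =>
    rw [pow_succ', Equiv.Perm.mul_apply, pow_succ', Equiv.Perm.mul_apply, ih]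
    set z := (σ ^ k) x with hz
    have hxz : σ.SameCycle x (σ z) := ⟨(k : ℤ) + 1, by
      rw [zpow_add, zpow_one, Equiv.Perm.mul_apply, zpow_natCast, hz,
        ← Equiv.Perm.mul_apply, ← Equiv.Perm.mul_apply, ← pow_succ, pow_succ']⟩
    have h1 : σ z ≠ a := fun h => ha (h ▸ hxz)
    have h2 : σ z ≠ b := fun h => hb (h ▸ hxz)
    simp [Equiv.Perm.mul_apply, Equiv.swap_apply_of_ne_of_ne h1 h2]
    exact hz

lemma sameCycle_iff_exists_pow (σ : Perm α) (x y : α) :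
    σ.SameCycle x y ↔ ∃ k : ℕ, (σ ^ k) x = y := by
  constructor
  · intro h
    obtain ⟨i, _, hi⟩ := h.exists_pow_eq'
    exact ⟨i, hi⟩
  · rintro ⟨k, rfl⟩
    exact ⟨(k : ℤ), by rw [zpow_natCast]⟩

lemma not_sameCycle_swap_mul (σ : Perm α) (a b x : α) (ha : ¬σ.SameCycle x a)
    (hb : ¬σ.SameCycle x b) :
    ¬(Equiv.swap a b * σ).SameCycle x a ∧ ¬(Equiv.swap a b * σ).SameCycle x b := by
  constructor
  · intro h
    obtain ⟨k, hk⟩ := (sameCycle_iff_exists_pow _ x a).1 h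
    rw [pow_swap_mul_eq σ a b x ha hb] at hk
    exact ha ⟨(k : ℤ), by rw [zpow_natCast]; exact hk⟩
  · intro h
    obtain ⟨k, hk⟩ := (sameCycle_iff_exists_pow _ x b).1 h
    rw [pow_swap_mul_eq σ a b x ha hb] at hk
    exact hb ⟨(k : ℤ), by rw [zpow_natCast]; exact hk⟩

lemma sameCycle_swap_mul_iff (σ : Perm α) (a b x y : α) (ha : ¬σ.SameCycle x a)
    (hb : ¬σ.SameCycle x b) :
    (Equiv.swap a b * σ).SameCycle x y ↔ σ.SameCycle x y := by
  rw [sameCycle_iff_exists_pow, sameCycle_iff_exists_pow]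
  constructor
  · rintro ⟨k, hk⟩
    exact ⟨k, by rw [← pow_swap_mul_eq σ a b x ha hb]; exact hk⟩
  · rintro ⟨k, hk⟩
    exact ⟨k, by rw [pow_swap_mul_eq σ a b x ha hb]; exact hk⟩

/-- The subtype of classes not containing `a` nor `b`. -/
abbrev offT (σ : Perm α) (a b : α) :=
  {q : Quotient (SameCycle.setoid σ) // ¬(q = cl σ a ∨ q = cl σ b)}

/-- The subtype of classes containing `a` or `b`. -/
abbrev onT (σ : Perm α) (a b : α) :=
  {q : Quotient (SameCycle.setoid σ) // q = cl σ a ∨ q = cl σ b}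

lemma offT_not_rel {σ : Perm α} {a b : α} (q : offT σ a b) :
    ¬σ.SameCycle q.1.out a ∧ ¬σ.SameCycle q.1.out b := by
  constructor
  · intro h
    exact q.2 (Or.inl (by rw [← cl_out σ q.1]; exact cl_eq_iff.2 h))
  · intro h
    exact q.2 (Or.inr (by rw [← cl_out σ q.1]; exact cl_eq_iff.2 h))

/-- Transport of off-classes along multiplication by a swap. -/
noncomputable def offMap (σ σ' : Perm α) (a b : α) (h : σ' = Equiv.swap a b * σ)
    (q : offT σ a b) : offT σ' a b :=
  ⟨cl σ' q.1.out, by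
    obtain ⟨ha, hb⟩ := offT_not_rel q
    obtain ⟨ha', hb'⟩ := not_sameCycle_swap_mul σ a b q.1.out ha hb
    rw [← h] at ha' hb'
    rintro (hc | hc)
    · exact ha' (cl_eq_iff.1 hc)
    · exact hb' (cl_eq_iff.1 hc)⟩

lemma offMap_offMap (σ σ' : Perm α) (a b : α) (h : σ' = Equiv.swap a b * σ)
    (h' : σ = Equiv.swap a b * σ') (q : offT σ a b) :
    offMap σ' σ a b h' (offMap σ σ' a b h q) = q := by
  obtain ⟨ha, hb⟩ := offT_not_rel q
  obtain ⟨ha', hb'⟩ := offT_not_rel (offMap σ σ' a b h q)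
  apply Subtype.ext
  show cl σ (cl σ' q.1.out).out = q.1
  set o : α := q.1.out with ho
  set o' : α := (cl σ' o).out with ho'
  have hao' : ¬σ'.SameCycle o' a := ha'
  have hbo' : ¬σ'.SameCycle o' b := hb'
  have hrel' : σ'.SameCycle o' o := by
    refine cl_eq_iff.1 ?_
    rw [ho', cl_out]
  have hrel : σ.SameCycle o' o := by
    rw [h']
    exact (sameCycle_swap_mul_iff σ' a b o' o hao' hbo').2 hrel'
  rw [ho] at hrel
  rw [← cl_out σ q.1]
  exact cl_eq_iff.2 hrel

/-- The count of classes missing `a, b` is invariant under multiplication by `swap a b`. -/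
lemma card_offT_eq (σ : Perm α) (a b : α) :
    Nat.card (offT (Equiv.swap a b * σ) a b) = Nat.card (offT σ a b) := by
  set σ' := Equiv.swap a b * σ with hσ'
  have h' : σ = Equiv.swap a b * σ' := by rw [hσ', ← mul_assoc, Equiv.swap_mul_self, one_mul]
  exact Nat.card_congr
    ⟨offMap σ' σ a b h', offMap σ σ' a b rfl,
      offMap_offMap σ' σ a b h' rfl, offMap_offMap σ σ' a b rfl h'⟩

lemma cc_eq_card_add (σ : Perm α) (a b : α) :
    cc σ = Nat.card (offT σ a b) + Nat.card (onT σ a b) := by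
  classical
  unfold cc
  rw [← Nat.card_congr (Equiv.sumCompl (fun q : Quotient (SameCycle.setoid σ) =>
    q = cl σ a ∨ q = cl σ b)), Nat.card_sum]
  exact add_comm _ _

lemma one_le_card_onT (σ : Perm α) (a b : α) : 1 ≤ Nat.card (onT σ a b) :=
  Nat.card_pos_iff.2 ⟨⟨⟨cl σ a, Or.inl rfl⟩⟩, inferInstance⟩

lemma card_onT_le_two (σ : Perm α) (a b : α) : Nat.card (onT σ a b) ≤ 2 := by
  have hs : Function.Surjective
      ![(⟨cl σ a, Or.inl rfl⟩ : onT σ a b), ⟨cl σ b, Or.inr rfl⟩] := by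
    rintro ⟨q, hq | hq⟩
    · exact ⟨0, by simp only [Matrix.cons_val_zero]; exact Subtype.ext hq.symm⟩
    · exact ⟨1, by simp only [Matrix.cons_val_one, Matrix.head_cons]; exact Subtype.ext hq.symm⟩
  have := Nat.card_le_card_of_surjective _ hs
  simpa using this

/-- The master counting identity. -/
lemma cc_swap_mul_add (σ : Perm α) (a b : α) :
    cc (Equiv.swap a b * σ) + Nat.card (onT σ a b)
      = cc σ + Nat.card (onT (Equiv.swap a b * σ) a b) := by
  rw [cc_eq_card_add (Equiv.swap a b * σ) a b, cc_eq_card_add σ a b, card_offT_eq σ a b]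
  omega

/-- Multiplication by a swap decreases the cycle count by at most one. -/
lemma cc_le_cc_swap_mul_add_one (σ : Perm α) (a b : α) :
    cc σ ≤ cc (Equiv.swap a b * σ) + 1 := by
  have h := cc_swap_mul_add σ a b
  have h1 := one_le_card_onT σ a b
  have h2 := card_onT_le_two σ a b
  have h3 := one_le_card_onT (Equiv.swap a b * σ) a b
  have h4 := card_onT_le_two (Equiv.swap a b * σ) a b
  omega

/-- Splitting off a point from a cycle increases cycle count by one. -/
lemma cc_swap_mul_sameCycle (σ : Perm α) (a : α) (ha : σ a ≠ a) :
    cc (Equiv.swap a (σ a) * σ) = cc σ + 1 := by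
  set σ' := Equiv.swap a (σ a) * σ with hσ'
  have hfix : σ' a = a := by
    rw [hσ', Equiv.Perm.mul_apply, Equiv.swap_apply_right]
  have hone : Nat.card (onT σ a (σ a)) = 1 := by
    have hab : cl σ a = cl σ (σ a) := cl_eq_iff.2 ⟨1, by rw [zpow_one]⟩
    rw [Nat.card_eq_one_iff_unique]
    constructor
    · constructor
      rintro ⟨q, hq | hq⟩ ⟨r, hr | hr⟩ <;>
        exact Subtype.ext (by simp only [hq, hr, hab])
    · exact ⟨⟨cl σ a, Or.inl rfl⟩⟩
  have htwo : Nat.card (onT σ' a (σ a)) = 2 := by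
    have hne : cl σ' a ≠ cl σ' (σ a) := by
      intro h
      have hc := cl_eq_iff.1 h
      exact ha (hc.eq_of_left hfix).symm
    have h2 : 2 ≤ Nat.card (onT σ' a (σ a)) := by
      have : Nontrivial (onT σ' a (σ a)) :=
        ⟨⟨⟨cl σ' a, Or.inl rfl⟩, ⟨cl σ' (σ a), Or.inr rfl⟩, by
          intro h
          exact hne (congrArg Subtype.val h)⟩⟩
      exact Finite.one_lt_card_iff_nontrivial.2 this
    have h3 := card_onT_le_two σ' a (σ a)
    omega
  have h := cc_swap_mul_add σ a (σ a)
  rw [← hσ'] at h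
  omega

lemma cc_one : cc (1 : Perm α) = Fintype.card α := by
  have e : α ≃ Quotient (SameCycle.setoid (1 : Perm α)) := by
    refine Equiv.ofBijective (cl 1) ⟨fun x y h => ?_, cl_surjective 1⟩
    · exact sameCycle_one.1 (cl_eq_iff.1 h)
  rw [cc, ← Nat.card_congr e, Nat.card_eq_fintype_card]

lemma cc_le (σ : Perm α) : cc σ ≤ Fintype.card α := by
  have := Nat.card_le_card_of_surjective (cl σ) (cl_surjective σ)
  rw [← Nat.card_eq_fintype_card]
  exact this

lemma one_le_cc [Nonempty α] (σ : Perm α) : 1 ≤ cc σ :=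
  Nat.card_pos_iff.2 ⟨⟨cl σ (Classical.arbitrary α)⟩, inferInstance⟩

lemma eq_one_of_cc_eq_card (σ : Perm α) (h : cc σ = Fintype.card α) : σ = 1 := by
  have hb : Function.Bijective (cl σ) := by
    refine (Nat.bijective_iff_surjective_and_card (cl σ)).2 ⟨cl_surjective σ, ?_⟩
    rw [Nat.card_eq_fintype_card, ← h]
    rfl
  ext x
  have : cl σ x = cl σ (σ x) := cl_eq_iff.2 ⟨1, by rw [zpow_one]⟩
  simpa using (hb.1 this).symm

lemma cc_finRotate {n : ℕ} (hn : 2 ≤ n) : cc (finRotate n) = 1 := by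
  have hsupp : ∀ x : Fin n, finRotate n x ≠ x := by
    intro x
    have : x ∈ (finRotate n).support := by
      rw [support_finRotate_of_le hn]
      exact Finset.mem_univ x
    exact Equiv.Perm.mem_support.1 this
  have hcyc : (finRotate n).IsCycle := isCycle_finRotate_of_le hn
  rw [cc, Nat.card_eq_one_iff_unique]
  haveI : NeZero n := ⟨by omega⟩
  refine ⟨⟨fun q r => ?_⟩, ⟨cl (finRotate n) 0⟩⟩
  rw [← cl_out _ q, ← cl_out _ r]
  exact cl_eq_iff.2 (hcyc.sameCycle (hsupp _) (hsupp _))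

section SwapLengthTheory

variable {n : ℕ}

/-- swapLength stated with local definition -/
noncomputable def sl (n : ℕ) (σ : Equiv.Perm (Fin n)) : ℕ :=
  sInf {k | ∃ l : List (Equiv.Perm (Fin n)),
    l.length = k ∧ (∀ t ∈ l, t.IsSwap) ∧ l.prod = σ}

lemma cc_lower (l : List (Perm (Fin n))) (hl : ∀ t ∈ l, t.IsSwap) :
    n ≤ cc l.prod + l.length := by
  induction l with
  | nil =>
    simp only [List.prod_nil, List.length_nil, add_zero]
    rw [cc_one, Fintype.card_fin]
  | cons t l ih =>
    have ht : t.IsSwap := hl t List.mem_cons_self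
    obtain ⟨a, b, -, rfl⟩ := ht
    have h1 := cc_le_cc_swap_mul_add_one l.prod a b
    have h2 := ih (fun u hu => hl u (List.mem_cons_of_mem _ hu))
    rw [List.prod_cons, List.length_cons]
    omega

lemma swaps_upper : ∀ (m : ℕ) (σ : Perm (Fin n)), n - cc σ ≤ m →
    ∃ l : List (Perm (Fin n)), (∀ t ∈ l, t.IsSwap) ∧ l.prod = σ ∧ l.length + cc σ = n := by
  intro m
  induction m with
  | zero =>
    intro σ hσ
    have h1 : cc σ ≤ n := by simpa using cc_le σ
    have h2 : cc σ = n := by omega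
    have h3 : σ = 1 := eq_one_of_cc_eq_card σ (by simpa using h2)
    exact ⟨[], by simp, by simp [h3], by simp [h2]⟩
  | succ m ih =>
    intro σ hσ
    by_cases h1 : σ = 1
    · refine ⟨[], by simp, by simp [h1], ?_⟩
      rw [h1, cc_one, Fintype.card_fin]
      simp
    · have : ∃ x, σ x ≠ x := by
        by_contra h
        push_neg at h
        exact h1 (Equiv.ext h)
      obtain ⟨x, hx⟩ := this
      set σ'' := Equiv.swap x (σ x) * σ with hσ''
      have hcc : cc σ'' = cc σ + 1 := cc_swap_mul_sameCycle σ x hx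
      have hle : cc σ'' ≤ n := by simpa using cc_le σ''
      obtain ⟨l, hl1, hl2, hl3⟩ := ih σ'' (by omega)
      refine ⟨Equiv.swap x (σ x) :: l, ?_, ?_, ?_⟩
      · intro u hu
        rcases List.mem_cons.1 hu with h | h
        · exact h ▸ ⟨x, σ x, Ne.symm hx, rfl⟩
        · exact hl1 u h
      · rw [List.prod_cons, hl2, hσ'', ← mul_assoc, Equiv.swap_mul_self, one_mul]
      · rw [List.length_cons]
        omega

lemma sl_eq_cc (σ : Perm (Fin n)) : sl n σ = n - cc σ := by
  obtain ⟨l, hl1, hl2, hl3⟩ := swaps_upper (n - cc σ) σ le_rfl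
  apply le_antisymm
  · apply Nat.sInf_le
    exact ⟨l, by omega, hl1, hl2⟩
  · refine le_csInf ⟨l.length, ⟨l, rfl, hl1, hl2⟩⟩ ?_
    rintro k ⟨l', rfl, hl1', hl2'⟩
    have := cc_lower l' hl1'
    rw [hl2'] at this
    omega

lemma sl_triangle (σ τ : Perm (Fin n)) : sl n (σ * τ) ≤ sl n σ + sl n τ := by
  obtain ⟨l1, h11, h12, h13⟩ := swaps_upper (n - cc σ) σ le_rfl
  obtain ⟨l2, h21, h22, h23⟩ := swaps_upper (n - cc τ) τ le_rfl
  have hmem : (l1 ++ l2).length ∈ {k | ∃ l : List (Equiv.Perm (Fin n)),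
      l.length = k ∧ (∀ t ∈ l, t.IsSwap) ∧ l.prod = σ * τ} := by
    refine ⟨l1 ++ l2, rfl, ?_, ?_⟩
    · intro t ht
      rcases List.mem_append.1 ht with h | h
      · exact h11 t h
      · exact h21 t h
    · rw [List.prod_append, h12, h22]
  have := Nat.sInf_le hmem
  rw [List.length_append] at this
  calc sl n (σ * τ) ≤ l1.length + l2.length := this
  _ ≤ (n - cc σ) + (n - cc τ) := by omega
  _ = sl n σ + sl n τ := by rw [sl_eq_cc, sl_eq_cc]

end SwapLengthTheory

end SwapRed

end Machinery

section Final

open Equiv Equiv.Perm SwapRed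

lemma swapLength_eq_cc {n : ℕ} (σ : Equiv.Perm (Fin n)) :
    swapLength n σ = n - SwapRed.cc σ := SwapRed.sl_eq_cc σ

lemma swapLength_triangle {n : ℕ} (σ τ : Equiv.Perm (Fin n)) :
    swapLength n (σ * τ) ≤ swapLength n σ + swapLength n τ := SwapRed.sl_triangle σ τ

lemma orbitCount_eq_cc {n : ℕ} (σ : Equiv.Perm (Fin n)) :
    orbitCount n σ = SwapRed.cc σ := by
  have hs : MulAction.orbitRel (Subgroup.zpowers σ) (Fin n) = SameCycle.setoid σ := by
    apply Setoid.ext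
    intro x y
    change (MulAction.orbitRel (Subgroup.zpowers σ) (Fin n)) x y ↔ σ.SameCycle x y
    rw [MulAction.orbitRel_apply, MulAction.mem_orbit_iff]
    constructor
    · rintro ⟨⟨g, hg⟩, h⟩
      obtain ⟨k, rfl⟩ := Subgroup.mem_zpowers_iff.1 hg
      exact (show σ.SameCycle y x from ⟨k, h⟩).symm
    · intro h
      obtain ⟨k, hk⟩ := h.symm
      exact ⟨⟨σ ^ k, Subgroup.mem_zpowers_iff.2 ⟨k, rfl⟩⟩, hk⟩
  show Nat.card (Quotient (MulAction.orbitRel (Subgroup.zpowers σ) (Fin n)))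
    = Nat.card (Quotient (SameCycle.setoid σ))
  rw [hs]

end Final

/-- The reduction step: if `σ, τ` lie in the interval from `e` to `s`, `τ` fixes
the top element of `Fin n` but `σ` sends it to `i ≠ ⊤`, then
`σ' = (swap i ⊤) * σ` fixes `⊤`, lies in the interval, is one Cayley step from
`σ`, and the system of meanders of `(σ', τ)` has exactly one more component
than that of `(σ, τ)`, so `σ'` is one step closer to `τ`. -/
theorem reduction_step (n : ℕ) (hn : 2 ≤ n) (top : Fin n)
    (htop : (top : ℕ) = n - 1) (σ τ : Equiv.Perm (Fin n))
    (hσ : swapLength n σ + swapLength n (σ⁻¹ * finRotate n) = n - 1)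
    (hτ : swapLength n τ + swapLength n (τ⁻¹ * finRotate n) = n - 1)
    (hτtop : τ top = top) (i : Fin n) (hσtop : σ top = i) (hi : i ≠ top) :
    (Equiv.swap i top * σ) top = top ∧
    swapLength n (Equiv.swap i top * σ) +
        swapLength n ((Equiv.swap i top * σ)⁻¹ * finRotate n) = n - 1 ∧
    (∃ a b : Fin n, a ≠ b ∧ σ⁻¹ * (Equiv.swap i top * σ) = Equiv.swap a b) ∧
    orbitCount n ((Equiv.swap i top * σ)⁻¹ * τ) = orbitCount n (σ⁻¹ * τ) + 1 ∧
    swapLength n ((Equiv.swap i top * σ)⁻¹ * τ) = swapLength n (σ⁻¹ * τ) - 1 := by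
  open SwapRed in
  have hswap : Equiv.swap i top = Equiv.swap top (σ top) := by
    rw [hσtop, Equiv.swap_comm]
  set s := finRotate n with hs
  set σ' := Equiv.swap i top * σ with hσ'def
  -- Part 1
  have p1 : σ' top = top := by
    rw [hσ'def, Equiv.Perm.mul_apply, hσtop, Equiv.swap_apply_left]
  -- basic cycle count facts
  have hfixtop : σ top ≠ top := by rw [hσtop]; exact hi
  have hccσ' : SwapRed.cc σ' = SwapRed.cc σ + 1 := by
    rw [hσ'def, hswap]
    exact SwapRed.cc_swap_mul_sameCycle σ top hfixtop
  have hccσ'_le : SwapRed.cc σ' ≤ n := by simpa using SwapRed.cc_le σ'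
  -- conjugated swap
  have hconj : σ⁻¹ * Equiv.swap i top * σ = Equiv.swap (σ⁻¹ i) (σ⁻¹ top) := by
    rw [Equiv.swap_apply_apply σ⁻¹ i top, inv_inv]
  -- Part 3
  have p3 : ∃ a b : Fin n, a ≠ b ∧ σ⁻¹ * (Equiv.swap i top * σ) = Equiv.swap a b := by
    refine ⟨σ⁻¹ i, σ⁻¹ top, fun h => hi (σ⁻¹.injective h), ?_⟩
    rw [← hconj, mul_assoc]
  -- expression of σ'⁻¹ * ρ for any ρ
  have hkey : ∀ ρ : Equiv.Perm (Fin n),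
      σ'⁻¹ * ρ = Equiv.swap (σ⁻¹ i) (σ⁻¹ top) * (σ⁻¹ * ρ) := by
    intro ρ
    rw [← hconj, hσ'def, mul_inv_rev, Equiv.swap_inv]
    group
  haveI : Nonempty (Fin n) := ⟨top⟩
  -- Part 2
  have p2 : swapLength n σ' + swapLength n (σ'⁻¹ * s) = n - 1 := by
    have htri : swapLength n s ≤ swapLength n σ' + swapLength n (σ'⁻¹ * s) := by
      have := swapLength_triangle σ' (σ'⁻¹ * s)
      rwa [← mul_assoc, mul_inv_cancel, one_mul] at this
    have hccs : SwapRed.cc s = 1 := SwapRed.cc_finRotate hn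
    have hmono : SwapRed.cc (σ⁻¹ * s) ≤ SwapRed.cc (σ'⁻¹ * s) + 1 := by
      rw [hkey s]
      exact SwapRed.cc_le_cc_swap_mul_add_one (σ⁻¹ * s) _ _
    have h1 : SwapRed.cc (σ'⁻¹ * s) ≤ n := by simpa using SwapRed.cc_le (σ'⁻¹ * s)
    have h2 : SwapRed.cc (σ⁻¹ * s) ≤ n := by simpa using SwapRed.cc_le (σ⁻¹ * s)
    have h3 : 1 ≤ SwapRed.cc (σ⁻¹ * s) := SwapRed.one_le_cc _
    simp only [swapLength_eq_cc] at hσ htri ⊢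
    omega
  -- Part 4
  have hρtop : (σ⁻¹ * τ) top = σ⁻¹ top := by
    rw [Equiv.Perm.mul_apply, hτtop]
  have hρtopne : (σ⁻¹ * τ) top ≠ top := by
    rw [hρtop]
    intro h
    exact hfixtop ((Equiv.Perm.inv_eq_iff_eq.1 h).symm)
  have hiσ : σ⁻¹ i = top := by rw [← hσtop]; simp
  have hkeyτ : σ'⁻¹ * τ = Equiv.swap top ((σ⁻¹ * τ) top) * (σ⁻¹ * τ) := by
    rw [hkey τ, hiσ, hρtop]
  have hccτ : SwapRed.cc (σ'⁻¹ * τ) = SwapRed.cc (σ⁻¹ * τ) + 1 := by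
    rw [hkeyτ]
    exact SwapRed.cc_swap_mul_sameCycle (σ⁻¹ * τ) top hρtopne
  have p4 : orbitCount n (σ'⁻¹ * τ) = orbitCount n (σ⁻¹ * τ) + 1 := by
    rw [orbitCount_eq_cc, orbitCount_eq_cc, hccτ]
  have p5 : swapLength n (σ'⁻¹ * τ) = swapLength n (σ⁻¹ * τ) - 1 := by
    rw [swapLength_eq_cc, swapLength_eq_cc, hccτ]
    omega
  exact ⟨p1, p2, p3, p4, p5⟩
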